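/- Fix integers n ≥ 1, 0 ≤ θ_1 < θ_2 ≤ n-1, and let p* = 1/(1 + ((n-θ_2)C(n,θ_2)/((n-θ_1)C(n,θ_1)))^{1/(θ_2-θ_1)}). Then G_B(p) = F_B(θ_2; n, p) - F_B(θ_1; n, p) is increasing on (0, p*] and decreasing on [p*, 1), where F_B is the Binomial(n,p) CDF. -/

import Mathlib

open Finset

private lemma cdf_hasDerivAt' (n : ℕ) : ∀ θ : ℕ, θ + 1 ≤ n → ∀ p : ℝ,
    HasDerivAt
      (fun p : ℝ => ∑ i ∈ Finset.range (θ + 1), (n.choose i : ℝ) * p ^ i * (1 - p) ^ (n - i))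
      (-(((n : ℝ) - θ) * n.choose θ * p ^ θ * (1 - p) ^ (n - 1 - θ))) p := by
  intro θ
  induction θ with
  | zero =>
      intro hθ p
      have hfun : (fun p : ℝ => ∑ i ∈ Finset.range (0 + 1),
          (n.choose i : ℝ) * p ^ i * (1 - p) ^ (n - i)) = fun p : ℝ => (1 - p) ^ n := by
        funext q; simp
      rw [hfun]
      have h : HasDerivAt (fun p : ℝ => (1 - p) ^ n)
          ((n : ℝ) * (1 - p) ^ (n - 1) * (-1)) p := ((hasDerivAt_id p).const_sub 1).pow n
      convert h using 1
      simp
  | succ θ ih =>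
      intro hθ p
      have IH := ih (by omega) p
      have hu : HasDerivAt (fun p : ℝ => (1 - p) ^ (n - (θ + 1)))
          (((n - (θ + 1) : ℕ) : ℝ) * (1 - p) ^ (n - (θ + 1) - 1) * (-1)) p :=
        ((hasDerivAt_id p).const_sub 1).pow _
      have hv : HasDerivAt (fun p : ℝ => (n.choose (θ + 1) : ℝ) * p ^ (θ + 1))
          ((n.choose (θ + 1) : ℝ) * (((θ + 1 : ℕ) : ℝ) * p ^ θ)) p := by
        simpa using (hasDerivAt_pow (θ + 1) p).const_mul ((n.choose (θ + 1) : ℝ))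
      have hterm := hv.mul hu
      have hfun : (fun p : ℝ => ∑ i ∈ Finset.range (θ + 1 + 1),
          (n.choose i : ℝ) * p ^ i * (1 - p) ^ (n - i))
          = fun p : ℝ => (∑ i ∈ Finset.range (θ + 1), (n.choose i : ℝ) * p ^ i * (1 - p) ^ (n - i))
            + (n.choose (θ + 1) : ℝ) * p ^ (θ + 1) * (1 - p) ^ (n - (θ + 1)) := by
        funext q; rw [Finset.sum_range_succ]
      rw [hfun]
      convert IH.add hterm using 1
      · rfl
      · rfl
      · rfl
      obtain ⟨m, hm⟩ : ∃ m, n = θ + 2 + m := ⟨n - θ - 2, by omega⟩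
      have e1 : n - 1 - (θ + 1) = m := by omega
      have e2 : n - 1 - θ = m + 1 := by omega
      have e4 : n - (θ + 1) - 1 = m := by omega
      have e3 : n - (θ + 1) = m + 1 := by omega
      have hN : (n : ℝ) = (θ : ℝ) + 2 + m := by exact_mod_cast congrArg (Nat.cast (R := ℝ)) hm
      have hCn : n.choose (θ + 1) * (θ + 1) = n.choose θ * (m + 2) := by
        rw [Nat.choose_succ_right_eq]; congr 1; omega
      have hC : (n.choose (θ + 1) : ℝ) * ((θ : ℝ) + 1) = (n.choose θ : ℝ) * ((m : ℝ) + 2) := by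
        exact_mod_cast congrArg (Nat.cast (R := ℝ)) hCn
      rw [e1, e2, e4, e3, hN]
      push_cast
      linear_combination (-(p ^ θ * (1 - p) ^ (m + 1))) * hC

theorem stmt8 (n θ1 θ2 : ℕ) (hn : 1 ≤ n) (h1 : θ1 < θ2) (h2 : θ2 ≤ n - 1) :
    let G : ℝ → ℝ :=
      fun p =>
        (∑ i ∈ Finset.range (θ2 + 1), (n.choose i : ℝ) * p ^ i * (1 - p) ^ (n - i)) -
          ∑ i ∈ Finset.range (θ1 + 1), (n.choose i : ℝ) * p ^ i * (1 - p) ^ (n - i)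
    let pStar : ℝ :=
      1 / (1 + ((((n : ℝ) - θ2) * (n.choose θ2 : ℝ)) / (((n : ℝ) - θ1) * (n.choose θ1 : ℝ))) ^
        (((θ2 : ℝ) - θ1)⁻¹))
    MonotoneOn G (Set.Ioc 0 pStar) ∧ AntitoneOn G (Set.Ico pStar 1) := by
  intro G pStar
  have hθ2n : θ2 + 1 ≤ n := by omega
  have hθ1n : θ1 + 1 ≤ n := by omega
  set A : ℝ := ((n : ℝ) - θ1) * (n.choose θ1 : ℝ) with hAdef
  set B : ℝ := ((n : ℝ) - θ2) * (n.choose θ2 : ℝ) with hBdef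
  have hA : 0 < A := by
    apply mul_pos
    · have : (θ1 : ℝ) < (n : ℝ) := by exact_mod_cast (by omega : θ1 < n)
      linarith
    · exact_mod_cast Nat.choose_pos (by omega : θ1 ≤ n)
  have hB : 0 < B := by
    apply mul_pos
    · have : (θ2 : ℝ) < (n : ℝ) := by exact_mod_cast (by omega : θ2 < n)
      linarith
    · exact_mod_cast Nat.choose_pos (by omega : θ2 ≤ n)
  set d : ℕ := θ2 - θ1 with hddef
  have hd : 0 < d := by omega
  have hr : 0 < B / A := div_pos hB hA
  set s : ℝ := (B / A) ^ (((θ2 : ℝ) - θ1)⁻¹) with hsdef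
  have hexp : ((θ2 : ℝ) - θ1)⁻¹ = ((d : ℕ) : ℝ)⁻¹ := by
    congr 1
    rw [hddef, Nat.cast_sub h1.le]
  have hs : 0 < s := Real.rpow_pos_of_pos hr _
  have hsd : s ^ d = B / A := by
    rw [hsdef, hexp, ← Real.rpow_natCast ((B / A) ^ (((d : ℕ) : ℝ)⁻¹)) d,
      ← Real.rpow_mul hr.le]
    rw [inv_mul_cancel₀ (by exact_mod_cast hd.ne' : ((d : ℕ) : ℝ) ≠ 0), Real.rpow_one]
  have hpStar : pStar = 1 / (1 + s) := rfl
  have hpS_pos : 0 < pStar := by rw [hpStar]; positivity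
  have hpS_lt1 : pStar < 1 := by
    rw [hpStar, div_lt_one (by linarith)]
    linarith
  -- derivative of G
  set D : ℝ → ℝ := fun p => A * p ^ θ1 * (1 - p) ^ (n - 1 - θ1)
      - B * p ^ θ2 * (1 - p) ^ (n - 1 - θ2) with hDdef
  have hG : ∀ p : ℝ, HasDerivAt G (D p) p := by
    intro p
    have h2' := cdf_hasDerivAt' n θ2 hθ2n p
    have h1' := cdf_hasDerivAt' n θ1 hθ1n p
    have := h2'.sub h1'
    convert this using 1
    · rfl
    · rfl
    · rfl
    rw [hDdef, hAdef, hBdef]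
    ring
  have hdiff : Differentiable ℝ G := fun p => (hG p).differentiableAt
  have hderiv : ∀ p : ℝ, deriv G p = D p := fun p => (hG p).deriv
  -- factorization of D
  have hfact : ∀ p : ℝ, D p = p ^ θ1 * (1 - p) ^ (n - 1 - θ2) *
      (A * (1 - p) ^ d - B * p ^ d) := by
    intro p
    have e5 : n - 1 - θ1 = (n - 1 - θ2) + d := by omega
    have e6 : θ2 = θ1 + d := by omega
    rw [hDdef, e5]
    nth_rewrite 2 [e6]
    simp only [pow_add]
    ring
  -- sign of D
  have key_pos : ∀ p : ℝ, 0 < p → p < 1 → p ≤ pStar → 0 ≤ D p := by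
    intro p hp hp1 hple
    have hq : 0 < 1 - p := by linarith
    have hsp : s * p ≤ 1 - p := by
      rw [hpStar, le_div_iff₀ (by linarith : (0:ℝ) < 1 + s)] at hple
      nlinarith
    have hsx : s ≤ (1 - p) / p := (le_div_iff₀ hp).mpr hsp
    have hpow : s ^ d ≤ ((1 - p) / p) ^ d := pow_le_pow_left₀ hs.le hsx d
    rw [hsd, div_pow] at hpow
    have h5 : B * p ^ d ≤ (1 - p) ^ d * A :=
      (div_le_div_iff₀ hA (pow_pos hp d)).mp hpow
    rw [hfact]
    apply mul_nonneg (mul_nonneg (pow_nonneg hp.le _) (pow_nonneg hq.le _))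
    linarith
  have key_neg : ∀ p : ℝ, 0 < p → p < 1 → pStar ≤ p → D p ≤ 0 := by
    intro p hp hp1 hple
    have hq : 0 < 1 - p := by linarith
    have hsp : 1 - p ≤ s * p := by
      rw [hpStar, div_le_iff₀ (by linarith : (0:ℝ) < 1 + s)] at hple
      nlinarith
    have hsx : (1 - p) / p ≤ s := (div_le_iff₀ hp).mpr hsp
    have hpow : ((1 - p) / p) ^ d ≤ s ^ d := pow_le_pow_left₀ (by positivity) hsx d
    rw [hsd, div_pow] at hpow
    have h5 : (1 - p) ^ d * A ≤ B * p ^ d :=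
      (div_le_div_iff₀ (pow_pos hp d) hA).mp hpow
    rw [hfact]
    have h6 : A * (1 - p) ^ d - B * p ^ d ≤ 0 := by linarith
    exact mul_nonpos_of_nonneg_of_nonpos
      (mul_nonneg (pow_nonneg hp.le _) (pow_nonneg hq.le _)) h6
  constructor
  · apply monotoneOn_of_deriv_nonneg (convex_Ioc _ _) hdiff.continuous.continuousOn
      hdiff.differentiableOn
    intro x hx
    rw [interior_Ioc] at hx
    rw [hderiv]
    exact key_pos x hx.1 (lt_trans hx.2 hpS_lt1) hx.2.le
  · apply antitoneOn_of_deriv_nonpos (convex_Ico _ _) hdiff.continuous.continuousOn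
      hdiff.differentiableOn
    intro x hx
    rw [interior_Ico] at hx
    rw [hderiv]
    exact key_neg x (lt_trans hpS_pos hx.1) hx.2 hx.1.le
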